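/- Let R be a noetherian commutative ring and for a proper ideal I define ω′(I) ∈ ℕ₀ ∪ {∞} as the smallest N such that whenever J₁ ⋯ J_n ⊆ I for ideals J₁, …, J_n, there is a subset Ω ⊆ {1,…,n} with |Ω| ≤ N and ∏_{λ∈Ω} J_λ ⊆ I. If J is an ideal with I ⊆ J and J/I isomorphic as an R-module to R/P for some prime ideal P, then ω′(I) ≤ ω′(J) + 1. -/

import Mathlib

open scoped BigOperators

/-- The invariant `ω′(I) ∈ ℕ₀ ∪ {∞}`: the smallest `N` such that whenever a finite
product of ideals `J₁ ⋯ J_n` is contained in `I`, there is a subset `Ω` of the indices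
with `|Ω| ≤ N` and `∏_{λ ∈ Ω} J_λ ⊆ I`. -/
noncomputable def omega' {R : Type*} [CommRing R] (I : Ideal R) : ℕ∞ :=
  sInf {N : ℕ∞ | ∀ (n : ℕ) (J : Fin n → Ideal R), (∏ i, J i) ≤ I →
    ∃ Ω : Finset (Fin n), (Ω.card : ℕ∞) ≤ N ∧ (∏ i ∈ Ω, J i) ≤ I}

/-- Let `R` be a noetherian commutative ring, `I` a proper ideal, and `J ⊇ I` an ideal
with `J/I` isomorphic as an `R`-module to `R/P` for a prime ideal `P`.
Then `ω′(I) ≤ ω′(J) + 1`. -/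
theorem omega'_le_succ {R : Type*} [CommRing R] [IsNoetherianRing R]
    (I J : Ideal R) (hI : I ≠ ⊤) (hIJ : I ≤ J) (P : Ideal R) (hP : P.IsPrime)
    (e : Nonempty ((↥J ⧸ (Submodule.comap J.subtype I)) ≃ₗ[R] (R ⧸ P))) :
    omega' I ≤ omega' J + 1 := by
  classical
  obtain ⟨φ⟩ := e
  set I' := Submodule.comap J.subtype I with hI'
  have hmemI' : ∀ (x : J), x ∈ I' ↔ (x : R) ∈ I := fun x => Iff.rfl
  -- Fact 1 : P * J ≤ I
  have fact1 : ∀ s ∈ P, ∀ x ∈ J, s * x ∈ I := by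
    intro s hs x hx
    have h0 : φ (s • Submodule.Quotient.mk (⟨x, hx⟩ : J)) = 0 := by
      rw [map_smul]
      obtain ⟨a, ha⟩ := Ideal.Quotient.mk_surjective (φ (Submodule.Quotient.mk ⟨x, hx⟩))
      rw [← ha]
      show Ideal.Quotient.mk P s * Ideal.Quotient.mk P a = 0
      rw [← map_mul, Ideal.Quotient.eq_zero_iff_mem]
      exact P.mul_mem_right a hs
    have h1 : s • Submodule.Quotient.mk (⟨x, hx⟩ : J) = (0 : J ⧸ I') := by
      apply φ.injective
      simpa using h0
    rw [← Submodule.Quotient.mk_smul, Submodule.Quotient.mk_eq_zero] at h1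
    exact h1
  -- Fact 2 : colon
  have fact2 : ∀ r ∈ J, r ∉ I → ∀ s : R, s * r ∈ I → s ∈ P := by
    intro r hrJ hrI s hsr
    have hne : Submodule.Quotient.mk (⟨r, hrJ⟩ : J) ≠ (0 : J ⧸ I') := by
      rw [Ne, Submodule.Quotient.mk_eq_zero]
      exact hrI
    obtain ⟨a, ha⟩ := Ideal.Quotient.mk_surjective (φ (Submodule.Quotient.mk ⟨r, hrJ⟩))
    have haP : a ∉ P := by
      intro haP
      apply hne
      apply φ.injective
      rw [map_zero, ← ha]
      exact Ideal.Quotient.eq_zero_iff_mem.mpr haP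
    have h1 : s • Submodule.Quotient.mk (⟨r, hrJ⟩ : J) = (0 : J ⧸ I') := by
      rw [← Submodule.Quotient.mk_smul, Submodule.Quotient.mk_eq_zero]
      exact hsr
    have h2 : (Ideal.Quotient.mk P) (s * a) = 0 := by
      have := congrArg φ h1
      rw [map_smul, map_zero, ← ha] at this
      exact this
    rw [Ideal.Quotient.eq_zero_iff_mem] at h2
    exact (hP.mem_or_mem h2).resolve_right haP
  -- omega' J satisfies its defining property
  have hJset : ∀ (n : ℕ) (K : Fin n → Ideal R), (∏ i, K i) ≤ J →
      ∃ Ω : Finset (Fin n), (Ω.card : ℕ∞) ≤ omega' J ∧ (∏ i ∈ Ω, K i) ≤ J := by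
    have : omega' J ∈ {N : ℕ∞ | ∀ (n : ℕ) (K : Fin n → Ideal R), (∏ i, K i) ≤ J →
        ∃ Ω : Finset (Fin n), (Ω.card : ℕ∞) ≤ N ∧ (∏ i ∈ Ω, K i) ≤ J} :=
      csInf_mem ⟨⊤, fun n K h => ⟨Finset.univ, le_top, h⟩⟩
    exact this
  apply sInf_le
  intro n K hK
  obtain ⟨Ω, hcard, hΩJ⟩ := hJset n K (hK.trans hIJ)
  by_cases hΩI : (∏ i ∈ Ω, K i) ≤ I
  · exact ⟨Ω, hcard.trans le_self_add, hΩI⟩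
  · obtain ⟨r, hrΩ, hrI⟩ := SetLike.not_le_iff_exists.mp hΩI
    have hrJ : r ∈ J := hΩJ hrΩ
    have hcomp : (∏ i ∈ Ωᶜ, K i) ≤ P := by
      intro s hs
      apply fact2 r hrJ hrI
      have hmul : s * r ∈ (∏ i ∈ Ωᶜ, K i) * (∏ i ∈ Ω, K i) := Ideal.mul_mem_mul hs hrΩ
      have hprod : (∏ i ∈ Ωᶜ, K i) * (∏ i ∈ Ω, K i) = ∏ i, K i := by
        rw [mul_comm, Finset.prod_mul_prod_compl]
      exact hK (hprod ▸ hmul)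
    obtain ⟨l, hlmem, hlP⟩ := hP.prod_le.mp hcomp
    have hlΩ : l ∉ Ω := Finset.mem_compl.mp hlmem
    refine ⟨insert l Ω, ?_, ?_⟩
    · calc ((insert l Ω).card : ℕ∞) ≤ ((Ω.card + 1 : ℕ) : ℕ∞) :=
            Nat.cast_le.mpr (Finset.card_insert_le l Ω)
        _ = (Ω.card : ℕ∞) + 1 := by push_cast; rfl
        _ ≤ omega' J + 1 := add_le_add hcard le_rfl
    · rw [Finset.prod_insert hlΩ]
      exact le_trans (Ideal.mul_mono hlP hΩJ) (Ideal.mul_le.mpr fact1)
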